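/- Let A ∈ ℝ^{n×n}, B ∈ ℝ^{n×m}, H ≥ 1, and suppose P_H(A,B) = [A^{H−1}B, …, B] has full row rank n. Let C ∈ ℝ^{n×n} and D ∈ ℝ^{m×m} be symmetric positive definite, 𝐂 = I_H ⊗ C, 𝐃 = I_H ⊗ D, let e_j ∈ ℝ^n be a standard basis vector, and set u_c = P_H(A,B)⁺ · A^H · e_j and g = [𝐂·G_u(A,B); 𝐃]·u_c (stacking 𝐂·G_u(A,B) on top of 𝐃). Then ‖g‖₂ ≤ (‖C‖₂·√H·λ_max(W^u_H(A,B))^{1/2} + ‖D‖₂)·λ_min(W^u_H(A,B))^{−1/2}·α_H, where α_H := max_{0 ≤ k ≤ H} ‖A^k‖₂. -/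

import Mathlib

open Matrix
open scoped Matrix.Norms.L2Operator Kronecker

/-- `Xp` is the Moore–Penrose pseudoinverse of `X`: the four Penrose conditions. -/
def IsMoorePenrose {α β : Type*} [Fintype α] [Fintype β] [DecidableEq α] [DecidableEq β]
    (X : Matrix α β ℝ) (Xp : Matrix β α ℝ) : Prop :=
  X * Xp * X = X ∧ Xp * X * Xp = Xp ∧ (X * Xp)ᵀ = X * Xp ∧ (Xp * X)ᵀ = Xp * X

/-- The Euclidean norm of a finitely-indexed real vector. -/
noncomputable def evnorm {ι : Type*} [Fintype ι] (v : ι → ℝ) : ℝ :=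
  Real.sqrt (∑ i, v i ^ 2)

/-- The block lower-triangular Toeplitz matrix `G_u(A,B) ∈ ℝ^{Hn×Hm}` whose `(i,j)` block
(for `j ≤ i`) is `A^{i−j}B` and whose blocks above the block diagonal are zero. -/
def Gu {n m : ℕ} (H : ℕ) (A : Matrix (Fin n) (Fin n) ℝ) (B : Matrix (Fin n) (Fin m) ℝ) :
    Matrix (Fin H × Fin n) (Fin H × Fin m) ℝ :=
  Matrix.of fun p q =>
    if (q.1 : ℕ) ≤ (p.1 : ℕ) then (A ^ ((p.1 : ℕ) - (q.1 : ℕ)) * B) p.2 q.2 else 0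

/-- The `H`-step controllability matrix `P_H(A,B) = [A^{H−1}B, …, B] ∈ ℝ^{n×Hm}`. -/
def PH {n m : ℕ} (H : ℕ) (A : Matrix (Fin n) (Fin n) ℝ) (B : Matrix (Fin n) (Fin m) ℝ) :
    Matrix (Fin n) (Fin H × Fin m) ℝ :=
  Matrix.of fun i q => (A ^ (H - 1 - (q.1 : ℕ)) * B) i q.2

/-- The `H`-th controllability Grammian `W^u_H(A,B) = ∑_{i=0}^{H−1} A^i B Bᵀ (Aᵀ)^i`. -/
def Wu {n m : ℕ} (H : ℕ) (A : Matrix (Fin n) (Fin n) ℝ) (B : Matrix (Fin n) (Fin m) ℝ) :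
    Matrix (Fin n) (Fin n) ℝ :=
  ∑ i ∈ Finset.range H, A ^ i * B * Bᵀ * (Aᵀ) ^ i

/-! ### Auxiliary lemmas -/

lemma evnorm_nonneg {ι : Type*} [Fintype ι] (v : ι → ℝ) : 0 ≤ evnorm v := Real.sqrt_nonneg _

lemma sq_evnorm {ι : Type*} [Fintype ι] (v : ι → ℝ) : evnorm v ^ 2 = ∑ i, v i ^ 2 :=
  Real.sq_sqrt (Finset.sum_nonneg fun _ _ => sq_nonneg _)

lemma evnorm_eq {ι : Type*} [Fintype ι] (v : ι → ℝ) :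
    evnorm v = ‖(EuclideanSpace.equiv ι ℝ).symm v‖ := by
  rw [EuclideanSpace.norm_eq]
  simp [evnorm, sq_abs]

lemma evnorm_mulVec_le {ι κ : Type*} [Fintype ι] [Fintype κ] [DecidableEq ι] [DecidableEq κ]
    (M : Matrix ι κ ℝ) (v : κ → ℝ) : evnorm (M.mulVec v) ≤ ‖M‖ * evnorm v := by
  rw [evnorm_eq, evnorm_eq]
  exact M.l2_opNorm_mulVec ((EuclideanSpace.equiv κ ℝ).symm v)

lemma dotProduct_le_evnorm {ι : Type*} [Fintype ι] (a b : ι → ℝ) :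
    a ⬝ᵥ b ≤ evnorm a * evnorm b :=
  Real.sum_mul_le_sqrt_mul_sqrt _ _ _

lemma dot_self_eq_sum_sq {ι : Type*} [Fintype ι] (y : ι → ℝ) : y ⬝ᵥ y = ∑ i, y i ^ 2 := by
  simp [dotProduct, sq]

lemma star_trivial_eq {n : ℕ} (U : Matrix (Fin n) (Fin n) ℝ) : star U = Uᵀ :=
  U.conjTranspose_eq_transpose_of_trivial

lemma quad_diag {n : ℕ} (U : Matrix (Fin n) (Fin n) ℝ) (d : Fin n → ℝ) (y : Fin n → ℝ) :
    y ⬝ᵥ ((U * diagonal d * Uᵀ) *ᵥ y) = ∑ i, d i * (Uᵀ *ᵥ y) i ^ 2 := by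
  have hvm : y ᵥ* U = Uᵀ *ᵥ y := by
    rw [← transpose_transpose U, vecMul_transpose, transpose_transpose]
  rw [← mulVec_mulVec, ← mulVec_mulVec, dotProduct_mulVec, hvm]
  simp only [dotProduct, mulVec_diagonal]
  exact Finset.sum_congr rfl fun i _ => by ring

lemma dot_self_transpose {n : ℕ} (U : Matrix (Fin n) (Fin n) ℝ) (hU : U * Uᵀ = 1)
    (y : Fin n → ℝ) : (Uᵀ *ᵥ y) ⬝ᵥ (Uᵀ *ᵥ y) = y ⬝ᵥ y := by
  rw [dotProduct_mulVec, vecMul_transpose, mulVec_mulVec, hU, one_mulVec]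

lemma Wu_eq_PH_mul_transpose {n m : ℕ} (H : ℕ) (A : Matrix (Fin n) (Fin n) ℝ)
    (B : Matrix (Fin n) (Fin m) ℝ) : Wu H A B = PH H A B * (PH H A B)ᵀ := by
  have h1 : Wu H A B = ∑ r ∈ Finset.range H, (A ^ r * B) * (A ^ r * B)ᵀ := by
    unfold Wu
    refine Finset.sum_congr rfl fun r _ => ?_
    rw [transpose_mul, transpose_pow, Matrix.mul_assoc]
  ext i k
  rw [h1, ← Finset.sum_range_reflect, Matrix.sum_apply, mul_apply, Fintype.sum_prod_type,
    Finset.sum_range fun r => ((A ^ (H - 1 - r) * B) * (A ^ (H - 1 - r) * B)ᵀ) i k]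
  refine Finset.sum_congr rfl fun q _ => ?_
  rw [mul_apply]
  simp [PH, transpose_apply]

/-- The shifted/zero-padded input whose `PH`-image is block `i` of `Gu *ᵥ u`. -/
def shiftv (H : ℕ) {m : ℕ} (i : Fin H) (u : Fin H × Fin m → ℝ) : Fin H × Fin m → ℝ :=
  fun q => if H - 1 - (i : ℕ) ≤ (q.1 : ℕ)
    then u (⟨(q.1 : ℕ) - (H - 1 - (i : ℕ)), lt_of_le_of_lt (Nat.sub_le _ _) q.1.2⟩, q.2) else 0

lemma Gu_block {n m : ℕ} (H : ℕ) (A : Matrix (Fin n) (Fin n) ℝ) (B : Matrix (Fin n) (Fin m) ℝ)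
    (u : Fin H × Fin m → ℝ) (i : Fin H) (k : Fin n) :
    (Gu H A B *ᵥ u) (i, k) = (PH H A B *ᵥ shiftv H i u) k := by
  have hH : 0 < H := i.pos
  have hiH := i.2
  simp only [mulVec, dotProduct, Fintype.sum_prod_type]
  set c := H - 1 - (i : ℕ) with hc
  have key : ∀ F G : Fin H → ℝ,
      (∀ q : Fin H, (q : ℕ) ≤ (i : ℕ) → F q = G ⟨((q : ℕ) + c) % H, Nat.mod_lt _ hH⟩) →
      (∀ q : Fin H, ¬ (q : ℕ) ≤ (i : ℕ) → F q = 0) →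
      (∀ q : Fin H, ¬ c ≤ (q : ℕ) → G q = 0) →
      ∑ q, F q = ∑ q, G q := by
    intro F G hFG hF0 hG0
    rw [← Finset.sum_filter_add_sum_filter_not Finset.univ (fun q : Fin H => (q : ℕ) ≤ (i : ℕ)) F,
      ← Finset.sum_filter_add_sum_filter_not Finset.univ (fun q : Fin H => c ≤ (q : ℕ)) G,
      Finset.sum_eq_zero fun q hq => hF0 q (Finset.mem_filter.mp hq).2,
      Finset.sum_eq_zero fun q hq => hG0 q (Finset.mem_filter.mp hq).2, add_zero, add_zero]
    refine Finset.sum_nbij' (fun q => (⟨((q : ℕ) + c) % H, Nat.mod_lt _ hH⟩ : Fin H))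
      (fun q => (⟨(q : ℕ) - c, lt_of_le_of_lt (Nat.sub_le _ _) q.2⟩ : Fin H)) ?_ ?_ ?_ ?_ ?_
    · intro q hq
      simp only [Finset.mem_filter, Finset.mem_univ, true_and] at hq ⊢
      have hqH := q.2
      rw [Nat.mod_eq_of_lt (by omega)]
      omega
    · intro q hq
      simp only [Finset.mem_filter, Finset.mem_univ, true_and] at hq ⊢
      have hqH := q.2
      omega
    · intro q hq
      simp only [Finset.mem_filter, Finset.mem_univ, true_and] at hq
      have hqH := q.2
      ext
      simp only [Nat.mod_eq_of_lt (show (q : ℕ) + c < H by omega)]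
      omega
    · intro q hq
      simp only [Finset.mem_filter, Finset.mem_univ, true_and] at hq
      have hqH := q.2
      ext
      simp only [Nat.mod_eq_of_lt (show (q : ℕ) - c + c < H by omega)]
      omega
    · intro q hq
      simp only [Finset.mem_filter, Finset.mem_univ, true_and] at hq
      exact hFG q hq
  refine key _ _ ?_ ?_ ?_
  · intro q hq
    have hqH := q.2
    have hlt : (q : ℕ) + c < H := by omega
    simp only [Gu, PH, shiftv, of_apply]
    refine Finset.sum_congr rfl fun l _ => ?_
    have hval : ((⟨((q : ℕ) + c) % H, Nat.mod_lt _ hH⟩ : Fin H) : ℕ) = (q : ℕ) + c :=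
      Nat.mod_eq_of_lt hlt
    rw [if_pos hq]
    rw [show (H - 1 - ((⟨((q : ℕ) + c) % H, Nat.mod_lt _ hH⟩ : Fin H) : ℕ)) = (i : ℕ) - (q : ℕ)
      by rw [hval]; omega]
    rw [if_pos (by rw [hval]; omega : H - 1 - (i : ℕ) ≤ ((⟨((q : ℕ) + c) % H,
      Nat.mod_lt _ hH⟩ : Fin H) : ℕ))]
    congr 1
    refine congrArg u (Prod.ext_iff.mpr ⟨Fin.ext ?_, rfl⟩)
    simp only [Nat.mod_eq_of_lt hlt]
    omega
  · intro q hq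
    simp only [Gu, of_apply]
    exact Finset.sum_eq_zero fun l _ => by rw [if_neg hq, zero_mul]
  · intro q hq
    simp only [PH, shiftv, of_apply]
    exact Finset.sum_eq_zero fun l _ => by rw [if_neg hq, mul_zero]

lemma shiftv_sq_le {H m : ℕ} (i : Fin H) (u : Fin H × Fin m → ℝ) :
    ∑ q, shiftv H i u q ^ 2 ≤ ∑ q, u q ^ 2 := by
  classical
  set c := H - 1 - (i : ℕ) with hc
  set ψ : Fin H × Fin m → Fin H × Fin m :=
    fun p => (⟨(p.1 : ℕ) - c, lt_of_le_of_lt (Nat.sub_le _ _) p.1.2⟩, p.2) with hψ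
  have h1 : ∑ q, shiftv H i u q ^ 2
      = ∑ p ∈ Finset.univ.filter (fun p : Fin H × Fin m => c ≤ (p.1 : ℕ)), u (ψ p) ^ 2 := by
    rw [Finset.sum_filter]
    refine Finset.sum_congr rfl fun p _ => ?_
    simp only [shiftv, hψ]
    split <;> simp [hc]
  have hinj : ∀ p ∈ Finset.univ.filter (fun p : Fin H × Fin m => c ≤ (p.1 : ℕ)),
      ∀ q ∈ Finset.univ.filter (fun p : Fin H × Fin m => c ≤ (p.1 : ℕ)), ψ p = ψ q → p = q := by
    intro p hp q hq hpq
    simp only [Finset.mem_filter, Finset.mem_univ, true_and] at hp hq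
    simp only [hψ, Prod.mk.injEq, Fin.mk.injEq] at hpq
    have := p.1.2; have := q.1.2
    exact Prod.ext (Fin.ext (by omega)) hpq.2
  have h2 : ∑ p ∈ (Finset.univ.filter (fun p : Fin H × Fin m => c ≤ (p.1 : ℕ))).image ψ,
      u p ^ 2 = ∑ p ∈ Finset.univ.filter (fun p : Fin H × Fin m => c ≤ (p.1 : ℕ)), u (ψ p) ^ 2 :=
    Finset.sum_image hinj
  rw [h1, ← h2]
  exact Finset.sum_le_sum_of_subset_of_nonneg (Finset.subset_univ _)
    (fun p _ _ => sq_nonneg _)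

lemma kron_one_mulVec {n H : ℕ} (C : Matrix (Fin n) (Fin n) ℝ) (w : Fin H × Fin n → ℝ)
    (i : Fin H) (k : Fin n) :
    (((1 : Matrix (Fin H) (Fin H) ℝ) ⊗ₖ C) *ᵥ w) (i, k) = (C *ᵥ fun l => w (i, l)) k := by
  simp only [mulVec, dotProduct, Fintype.sum_prod_type, kroneckerMap_apply, one_apply]
  rw [Finset.sum_eq_single i]
  · simp
  · intro q _ hqi
    exact Finset.sum_eq_zero fun l _ => by simp [Ne.symm hqi]
  · simp

/-- `evnorm` of a block-diagonal Kronecker product action. -/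
lemma evnorm_kron_mulVec_le {n H : ℕ} (C : Matrix (Fin n) (Fin n) ℝ) (w : Fin H × Fin n → ℝ) :
    evnorm (((1 : Matrix (Fin H) (Fin H) ℝ) ⊗ₖ C) *ᵥ w) ≤ ‖C‖ * evnorm w := by
  have hsq : evnorm (((1 : Matrix (Fin H) (Fin H) ℝ) ⊗ₖ C) *ᵥ w) ^ 2
      ≤ (‖C‖ * evnorm w) ^ 2 := by
    rw [sq_evnorm, Fintype.sum_prod_type]
    have hb : ∀ i : Fin H, ∑ k, (((1 : Matrix (Fin H) (Fin H) ℝ) ⊗ₖ C) *ᵥ w) (i, k) ^ 2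
        ≤ ‖C‖ ^ 2 * ∑ l, w (i, l) ^ 2 := by
      intro i
      have h1 : ∑ k, (((1 : Matrix (Fin H) (Fin H) ℝ) ⊗ₖ C) *ᵥ w) (i, k) ^ 2
          = evnorm (C *ᵥ fun l => w (i, l)) ^ 2 := by
        rw [sq_evnorm]
        exact Finset.sum_congr rfl fun k _ => by rw [kron_one_mulVec]
      rw [h1]
      have h2 := evnorm_mulVec_le C (fun l => w (i, l))
      have h3 : evnorm (C *ᵥ fun l => w (i, l)) ^ 2
          ≤ (‖C‖ * evnorm fun l => w (i, l)) ^ 2 :=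
        pow_le_pow_left₀ (evnorm_nonneg _) h2 2
      calc evnorm (C *ᵥ fun l => w (i, l)) ^ 2
          ≤ (‖C‖ * evnorm fun l => w (i, l)) ^ 2 := h3
        _ = ‖C‖ ^ 2 * ∑ l, w (i, l) ^ 2 := by rw [mul_pow, sq_evnorm]
    calc ∑ i, ∑ k, (((1 : Matrix (Fin H) (Fin H) ℝ) ⊗ₖ C) *ᵥ w) (i, k) ^ 2
        ≤ ∑ i, ‖C‖ ^ 2 * ∑ l, w (i, l) ^ 2 := Finset.sum_le_sum fun i _ => hb i
      _ = (‖C‖ * evnorm w) ^ 2 := by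
          rw [← Finset.mul_sum, mul_pow, sq_evnorm, Fintype.sum_prod_type]
  calc evnorm (((1 : Matrix (Fin H) (Fin H) ℝ) ⊗ₖ C) *ᵥ w)
      = Real.sqrt (evnorm (((1 : Matrix (Fin H) (Fin H) ℝ) ⊗ₖ C) *ᵥ w) ^ 2) :=
        (Real.sqrt_sq (evnorm_nonneg _)).symm
    _ ≤ Real.sqrt ((‖C‖ * evnorm w) ^ 2) := Real.sqrt_le_sqrt hsq
    _ = ‖C‖ * evnorm w := Real.sqrt_sq (mul_nonneg (norm_nonneg _) (evnorm_nonneg _))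

lemma evnorm_sum_elim_le {ι κ : Type*} [Fintype ι] [Fintype κ] (a : ι → ℝ) (b : κ → ℝ) :
    evnorm (Sum.elim a b) ≤ evnorm a + evnorm b := by
  have h : evnorm (Sum.elim a b) ^ 2 = evnorm a ^ 2 + evnorm b ^ 2 := by
    rw [sq_evnorm, sq_evnorm, sq_evnorm, Fintype.sum_sum_type]
    simp
  calc evnorm (Sum.elim a b) = Real.sqrt (evnorm a ^ 2 + evnorm b ^ 2) := by
        rw [← h, Real.sqrt_sq (evnorm_nonneg _)]
    _ ≤ Real.sqrt ((evnorm a + evnorm b) ^ 2) :=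
        Real.sqrt_le_sqrt (by nlinarith [evnorm_nonneg a, evnorm_nonneg b])
    _ = evnorm a + evnorm b := Real.sqrt_sq (add_nonneg (evnorm_nonneg a) (evnorm_nonneg b))


/-- Let `P_H(A,B)` have full row rank, `C, D` symmetric positive definite,
`u_c = P_H⁺ A^H e_j` and `g = [𝐂 G_u(A,B); 𝐃] u_c` with `𝐂 = I_H ⊗ C`, `𝐃 = I_H ⊗ D`.  Then
`‖g‖₂ ≤ (‖C‖₂ √H λ_max(W^u_H)^{1/2} + ‖D‖₂) λ_min(W^u_H)^{−1/2} α_H`,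
where `α_H = max_{0 ≤ k ≤ H} ‖A^k‖₂`. -/
theorem g_norm_bound
    {n m : ℕ} (H : ℕ) (hH : 1 ≤ H)
    (A : Matrix (Fin n) (Fin n) ℝ) (B : Matrix (Fin n) (Fin m) ℝ)
    (C : Matrix (Fin n) (Fin n) ℝ) (D : Matrix (Fin m) (Fin m) ℝ)
    (hC : C.PosDef) (hD : D.PosDef)
    (hrank : (PH H A B).rank = n)
    (Pp : Matrix (Fin H × Fin m) (Fin n) ℝ) (hPp : IsMoorePenrose (PH H A B) Pp)
    (j : Fin n)
    (hW : (Wu H A B).IsHermitian) :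
    evnorm ((Matrix.fromRows (((1 : Matrix (Fin H) (Fin H) ℝ) ⊗ₖ C) * Gu H A B)
        ((1 : Matrix (Fin H) (Fin H) ℝ) ⊗ₖ D)).mulVec
          (Pp.mulVec ((A ^ H).mulVec (Pi.single j 1)))) ≤
      (‖C‖ * Real.sqrt H * Real.sqrt (⨆ i : Fin n, hW.eigenvalues i) + ‖D‖) *
        (Real.sqrt (⨅ i : Fin n, hW.eigenvalues i))⁻¹ *
        ((Finset.range (H + 1)).sup' Finset.nonempty_range_add_one fun k => ‖A ^ k‖) := by
  classical
  obtain ⟨h1, h2, h3, h4⟩ := hPp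
  haveI : Nonempty (Fin n) := ⟨j⟩
  set P := PH H A B with hP
  set lam := hW.eigenvalues with hlam
  set U : Matrix (Fin n) (Fin n) ℝ := (hW.eigenvectorUnitary : Matrix (Fin n) (Fin n) ℝ) with hUdef
  have hWeq : Wu H A B = P * Pᵀ := Wu_eq_PH_mul_transpose H A B
  have hUUt : U * Uᵀ = 1 := by
    have h := Matrix.mem_unitaryGroup_iff.mp hW.eigenvectorUnitary.2
    rwa [star_trivial_eq] at h
  have hUtU : Uᵀ * U = 1 := by
    have h := Matrix.mem_unitaryGroup_iff'.mp hW.eigenvectorUnitary.2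
    rwa [star_trivial_eq] at h
  have hspec : Wu H A B = U * diagonal lam * Uᵀ := by
    have h := hW.spectral_theorem
    rwa [Unitary.conjStarAlgAut_apply, star_trivial_eq, show RCLike.ofReal ∘ lam = lam from funext fun i => by
      simp [RCLike.ofReal_real_eq_id]] at h
  have hquadW : ∀ y : Fin n → ℝ,
      y ⬝ᵥ (Wu H A B *ᵥ y) = ∑ i2, lam i2 * (Uᵀ *ᵥ y) i2 ^ 2 := by
    intro y; rw [hspec]; exact quad_diag U lam y
  have hWsq : Wu H A B * Wu H A B = U * diagonal (fun i2 => lam i2 ^ 2) * Uᵀ := by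
    rw [hspec]
    calc (U * diagonal lam * Uᵀ) * (U * diagonal lam * Uᵀ)
        = U * diagonal lam * ((Uᵀ * U) * (diagonal lam * Uᵀ)) := by
          simp only [Matrix.mul_assoc]
      _ = U * (diagonal lam * diagonal lam) * Uᵀ := by
          rw [hUtU, Matrix.one_mul]; simp only [Matrix.mul_assoc]
      _ = U * diagonal (fun i2 => lam i2 ^ 2) * Uᵀ := by
          rw [diagonal_mul_diagonal]
          congr 1
          congr 1
          funext i2
          ring
  have hWt : (Wu H A B)ᵀ = Wu H A B := by
    rw [← Matrix.conjTranspose_eq_transpose_of_trivial]; exact hW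
  have hvm : ∀ x : Fin n → ℝ, x ᵥ* Wu H A B = Wu H A B *ᵥ x := by
    intro x
    conv_lhs => rw [← hWt]
    rw [vecMul_transpose]
  have hquadW2 : ∀ y : Fin n → ℝ,
      ∑ i2, ((Wu H A B *ᵥ y) i2) ^ 2 = ∑ i2, lam i2 ^ 2 * (Uᵀ *ᵥ y) i2 ^ 2 := by
    intro y
    rw [← dot_self_eq_sum_sq, dotProduct_mulVec, hvm, mulVec_mulVec, dotProduct_comm, hWsq]
    exact quad_diag U _ y
  have hPSD : (Wu H A B).PosSemidef := by
    rw [hWeq, ← Matrix.conjTranspose_eq_transpose_of_trivial P]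
    exact posSemidef_self_mul_conjTranspose P
  have hlam0 : ∀ i2, 0 ≤ lam i2 := fun i2 => hPSD.eigenvalues_nonneg i2
  have hrankW : (Wu H A B).rank = n := by
    rw [hWeq, P.rank_self_mul_transpose]; exact hrank
  have hall : ∀ i2, lam i2 ≠ 0 := by
    intro i2 h0
    have hcard := hW.rank_eq_card_non_zero_eigs
    rw [hrankW] at hcard
    have hlt : Fintype.card {i3 // lam i3 ≠ 0} < Fintype.card (Fin n) :=
      Fintype.card_subtype_lt (x := i2) (by simp [h0])
    rw [Fintype.card_fin, ← hcard] at hlt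
    exact absurd hlt (lt_irrefl _)
  have hlampos : ∀ i2, 0 < lam i2 := fun i2 => (hlam0 i2).lt_of_ne (Ne.symm (hall i2))
  set lmin := ⨅ i2, lam i2 with hlmin
  set lmax := ⨆ i2, lam i2 with hlmax
  have hminle : ∀ i2, lmin ≤ lam i2 := fun i2 => ciInf_le (Finite.bddBelow_range _) i2
  have hminpos : 0 < lmin := by
    obtain ⟨i0, hi0⟩ := Finite.exists_min lam
    exact lt_of_lt_of_le (hlampos i0) (le_ciInf hi0)
  have hmaxle : ∀ i2, lam i2 ≤ lmax := fun i2 => le_ciSup (Finite.bddAbove_range _) i2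
  have hmax0 : 0 ≤ lmax := le_trans (hlam0 j) (hmaxle j)
  have S1 : ∀ y : Fin n → ℝ, y ⬝ᵥ (Wu H A B *ᵥ y) ≤ lmax * ∑ i2, y i2 ^ 2 := by
    intro y
    rw [hquadW]
    calc ∑ i2, lam i2 * (Uᵀ *ᵥ y) i2 ^ 2
        ≤ ∑ i2, lmax * (Uᵀ *ᵥ y) i2 ^ 2 :=
          Finset.sum_le_sum fun i2 _ => mul_le_mul_of_nonneg_right (hmaxle i2) (sq_nonneg _)
      _ = lmax * ∑ i2, y i2 ^ 2 := by
          rw [← Finset.mul_sum, ← dot_self_eq_sum_sq, dot_self_transpose U hUUt,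
            dot_self_eq_sum_sq]
  have S2 : ∀ y : Fin n → ℝ,
      lmin * (y ⬝ᵥ (Wu H A B *ᵥ y)) ≤ ∑ i2, ((Wu H A B *ᵥ y) i2) ^ 2 := by
    intro y
    rw [hquadW y, hquadW2 y, Finset.mul_sum]
    refine Finset.sum_le_sum fun i2 _ => ?_
    rw [← mul_assoc]
    refine mul_le_mul_of_nonneg_right ?_ (sq_nonneg _)
    nlinarith [hminle i2, hlampos i2]
  have KB1 : ∀ y : Fin n → ℝ, evnorm (Pᵀ *ᵥ y) ^ 2 = y ⬝ᵥ (Wu H A B *ᵥ y) := by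
    intro y
    rw [sq_evnorm, ← dot_self_eq_sum_sq, dotProduct_mulVec, vecMul_transpose, mulVec_mulVec,
      ← hWeq, dotProduct_comm]
  have KB1' : ∀ y : Fin n → ℝ, evnorm (Pᵀ *ᵥ y) ≤ Real.sqrt lmax * evnorm y := by
    intro y
    calc evnorm (Pᵀ *ᵥ y) = Real.sqrt (y ⬝ᵥ (Wu H A B *ᵥ y)) := by
          rw [← KB1 y, Real.sqrt_sq (evnorm_nonneg _)]
      _ ≤ Real.sqrt (lmax * ∑ i2, y i2 ^ 2) := Real.sqrt_le_sqrt (S1 y)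
      _ = Real.sqrt lmax * evnorm y := by rw [Real.sqrt_mul hmax0]; rfl
  have KB2 : ∀ x : Fin H × Fin m → ℝ, evnorm (P *ᵥ x) ≤ Real.sqrt lmax * evnorm x := by
    intro x
    rcases eq_or_lt_of_le (evnorm_nonneg (P *ᵥ x)) with h0 | ht
    · rw [← h0]
      exact mul_nonneg (Real.sqrt_nonneg _) (evnorm_nonneg _)
    have key : evnorm (P *ᵥ x) * evnorm (P *ᵥ x) ≤ (Real.sqrt lmax * evnorm x) *
        evnorm (P *ᵥ x) := by
      rw [← sq, sq_evnorm, ← dot_self_eq_sum_sq]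
      calc (P *ᵥ x) ⬝ᵥ (P *ᵥ x) = (Pᵀ *ᵥ (P *ᵥ x)) ⬝ᵥ x := by
            rw [dotProduct_mulVec, ← transpose_transpose P, vecMul_transpose,
              transpose_transpose]
        _ ≤ evnorm (Pᵀ *ᵥ (P *ᵥ x)) * evnorm x := dotProduct_le_evnorm _ _
        _ ≤ (Real.sqrt lmax * evnorm (P *ᵥ x)) * evnorm x :=
            mul_le_mul_of_nonneg_right (KB1' _) (evnorm_nonneg _)
        _ = (Real.sqrt lmax * evnorm x) * evnorm (P *ᵥ x) := by ring
    exact (mul_le_mul_iff_of_pos_right ht).mp key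
  have PHPp : P * Pp = 1 := by
    have hdet : IsUnit (Wu H A B).det := by
      rw [hW.det_eq_prod_eigenvalues]
      refine isUnit_iff_ne_zero.mpr (ne_of_gt ?_)
      have hpos : (0:ℝ) < ∏ i2, lam i2 := Finset.prod_pos fun i2 _ => hlampos i2
      simpa [RCLike.ofReal_real_eq_id] using hpos
    have hWinv : Wu H A B * (Wu H A B)⁻¹ = 1 := Matrix.mul_nonsing_inv _ hdet
    have hE : (P * Pp) * Wu H A B = Wu H A B := by
      rw [hWeq, ← Matrix.mul_assoc, h1]
    calc P * Pp = (P * Pp) * (Wu H A B * (Wu H A B)⁻¹) := by rw [hWinv, Matrix.mul_one]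
      _ = ((P * Pp) * Wu H A B) * (Wu H A B)⁻¹ := by simp only [Matrix.mul_assoc]
      _ = Wu H A B * (Wu H A B)⁻¹ := by rw [hE]
      _ = 1 := hWinv
  set w : Fin n → ℝ := (A ^ H) *ᵥ Pi.single j 1 with hwdef
  set u : Fin H × Fin m → ℝ := Pp *ᵥ w with hudef
  set y : Fin n → ℝ := (Ppᵀ * Pp) *ᵥ w with hydef
  have huy : u = Pᵀ *ᵥ y := by
    rw [hudef, hydef]
    calc Pp *ᵥ w = (Pp * P * Pp) *ᵥ w := by rw [h2]
      _ = ((Pp * P)ᵀ * Pp) *ᵥ w := by rw [h4]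
      _ = ((Pᵀ * Ppᵀ) * Pp) *ᵥ w := by rw [transpose_mul]
      _ = Pᵀ *ᵥ ((Ppᵀ * Pp) *ᵥ w) := by rw [mulVec_mulVec _ Pᵀ (Ppᵀ * Pp), Matrix.mul_assoc]
  have hWy : Wu H A B *ᵥ y = w := by
    rw [hWeq, hydef, mulVec_mulVec]
    have hone : (P * Pᵀ) * (Ppᵀ * Pp) = 1 := by
      have e : (P * Pᵀ) * (Ppᵀ * Pp) = P * (Pᵀ * Ppᵀ) * Pp := by
        simp only [Matrix.mul_assoc]
      rw [e, ← transpose_mul, h4, ← Matrix.mul_assoc P Pp P, PHPp, Matrix.one_mul, PHPp]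
    rw [hone, one_mulVec]
  have KB3 : evnorm u ≤ (Real.sqrt lmin)⁻¹ * evnorm w := by
    have hq : lmin * evnorm u ^ 2 ≤ evnorm w ^ 2 := by
      rw [huy, KB1 y, sq_evnorm]
      have h5 := S2 y
      rw [hWy] at h5
      rw [hWy]
      exact h5
    have hq2 : evnorm u ^ 2 ≤ evnorm w ^ 2 / lmin := by
      rw [le_div_iff₀ hminpos]
      linarith [hq]
    calc evnorm u = Real.sqrt (evnorm u ^ 2) := (Real.sqrt_sq (evnorm_nonneg _)).symm
      _ ≤ Real.sqrt (evnorm w ^ 2 / lmin) := Real.sqrt_le_sqrt hq2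
      _ = Real.sqrt (evnorm w ^ 2) / Real.sqrt lmin := Real.sqrt_div (sq_nonneg _) _
      _ = (Real.sqrt lmin)⁻¹ * evnorm w := by
          rw [Real.sqrt_sq (evnorm_nonneg _), div_eq_mul_inv, mul_comm]
  set α := (Finset.range (H + 1)).sup' Finset.nonempty_range_add_one (fun k => ‖A ^ k‖) with hα
  have hsingle : evnorm (Pi.single j (1:ℝ)) = 1 := by
    have : ∑ i2, (Pi.single j (1:ℝ) : Fin n → ℝ) i2 ^ 2 = 1 := by
      rw [Finset.sum_eq_single j]
      · simp
      · intro b _ hbj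
        rw [Pi.single_eq_of_ne hbj]
        simp
      · simp
    rw [evnorm, this, Real.sqrt_one]
  have hwle : evnorm w ≤ α := by
    calc evnorm w ≤ ‖A ^ H‖ * evnorm (Pi.single j (1:ℝ)) := evnorm_mulVec_le _ _
      _ = ‖A ^ H‖ := by rw [hsingle, mul_one]
      _ ≤ α := Finset.le_sup' (fun k => ‖A ^ k‖) (Finset.self_mem_range_succ H)
  have hα0 : 0 ≤ α :=
    le_trans (norm_nonneg (A ^ H)) (Finset.le_sup' (fun k => ‖A ^ k‖)
      (Finset.self_mem_range_succ H))
  have hGu : evnorm (Gu H A B *ᵥ u) ≤ Real.sqrt H * Real.sqrt lmax * evnorm u := by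
    have hsq : evnorm (Gu H A B *ᵥ u) ^ 2 ≤ (H : ℝ) * (lmax * evnorm u ^ 2) := by
      rw [sq_evnorm, Fintype.sum_prod_type]
      have hblock : ∀ i2 : Fin H, ∑ k, ((Gu H A B *ᵥ u) (i2, k)) ^ 2 ≤ lmax * evnorm u ^ 2 := by
        intro i2
        have e : ∑ k, ((Gu H A B *ᵥ u) (i2, k)) ^ 2 = evnorm (P *ᵥ shiftv H i2 u) ^ 2 := by
          rw [sq_evnorm]
          exact Finset.sum_congr rfl fun k _ => by rw [Gu_block]
        rw [e]
        have h5 : evnorm (P *ᵥ shiftv H i2 u) ≤ Real.sqrt lmax * evnorm (shiftv H i2 u) := KB2 _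
        have h6 : evnorm (P *ᵥ shiftv H i2 u) ^ 2 ≤ lmax * evnorm (shiftv H i2 u) ^ 2 := by
          calc evnorm (P *ᵥ shiftv H i2 u) ^ 2
              ≤ (Real.sqrt lmax * evnorm (shiftv H i2 u)) ^ 2 :=
                pow_le_pow_left₀ (evnorm_nonneg _) h5 2
            _ = lmax * evnorm (shiftv H i2 u) ^ 2 := by rw [mul_pow, Real.sq_sqrt hmax0]
        refine h6.trans (mul_le_mul_of_nonneg_left ?_ hmax0)
        rw [sq_evnorm, sq_evnorm]
        exact shiftv_sq_le i2 u
      calc ∑ i2, ∑ k, ((Gu H A B *ᵥ u) (i2, k)) ^ 2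
          ≤ ∑ _i2 : Fin H, (lmax * evnorm u ^ 2) := Finset.sum_le_sum fun i2 _ => hblock i2
        _ = (H : ℝ) * (lmax * evnorm u ^ 2) := by
            rw [Finset.sum_const, Finset.card_univ, Fintype.card_fin, nsmul_eq_mul]
    calc evnorm (Gu H A B *ᵥ u) = Real.sqrt (evnorm (Gu H A B *ᵥ u) ^ 2) :=
          (Real.sqrt_sq (evnorm_nonneg _)).symm
      _ ≤ Real.sqrt ((H : ℝ) * (lmax * evnorm u ^ 2)) := Real.sqrt_le_sqrt hsq
      _ = Real.sqrt H * Real.sqrt lmax * evnorm u := by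
          rw [Real.sqrt_mul (by positivity : (0:ℝ) ≤ (H : ℝ)), Real.sqrt_mul hmax0,
            Real.sqrt_sq (evnorm_nonneg _), mul_assoc]
  have hsplit : evnorm ((Matrix.fromRows (((1 : Matrix (Fin H) (Fin H) ℝ) ⊗ₖ C) * Gu H A B)
      ((1 : Matrix (Fin H) (Fin H) ℝ) ⊗ₖ D)) *ᵥ u)
      ≤ evnorm ((((1 : Matrix (Fin H) (Fin H) ℝ) ⊗ₖ C) * Gu H A B) *ᵥ u)
        + evnorm (((1 : Matrix (Fin H) (Fin H) ℝ) ⊗ₖ D) *ᵥ u) := by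
    rw [fromRows_mulVec]
    exact evnorm_sum_elim_le _ _
  have hCpart : evnorm ((((1 : Matrix (Fin H) (Fin H) ℝ) ⊗ₖ C) * Gu H A B) *ᵥ u)
      ≤ ‖C‖ * (Real.sqrt H * Real.sqrt lmax * evnorm u) := by
    rw [← mulVec_mulVec]
    exact (evnorm_kron_mulVec_le C _).trans (mul_le_mul_of_nonneg_left hGu (norm_nonneg _))
  have hDpart : evnorm (((1 : Matrix (Fin H) (Fin H) ℝ) ⊗ₖ D) *ᵥ u) ≤ ‖D‖ * evnorm u :=
    evnorm_kron_mulVec_le D u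
  have hu_le : evnorm u ≤ (Real.sqrt lmin)⁻¹ * α :=
    KB3.trans (mul_le_mul_of_nonneg_left hwle (inv_nonneg.mpr (Real.sqrt_nonneg _)))
  have hcoef : 0 ≤ ‖C‖ * Real.sqrt H * Real.sqrt lmax + ‖D‖ :=
    add_nonneg (mul_nonneg (mul_nonneg (norm_nonneg _) (Real.sqrt_nonneg _))
      (Real.sqrt_nonneg _)) (norm_nonneg _)
  calc evnorm ((Matrix.fromRows (((1 : Matrix (Fin H) (Fin H) ℝ) ⊗ₖ C) * Gu H A B)
        ((1 : Matrix (Fin H) (Fin H) ℝ) ⊗ₖ D)) *ᵥ u)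
      ≤ evnorm ((((1 : Matrix (Fin H) (Fin H) ℝ) ⊗ₖ C) * Gu H A B) *ᵥ u)
        + evnorm (((1 : Matrix (Fin H) (Fin H) ℝ) ⊗ₖ D) *ᵥ u) := hsplit
    _ ≤ ‖C‖ * (Real.sqrt H * Real.sqrt lmax * evnorm u) + ‖D‖ * evnorm u :=
        add_le_add hCpart hDpart
    _ = (‖C‖ * Real.sqrt H * Real.sqrt lmax + ‖D‖) * evnorm u := by ring
    _ ≤ (‖C‖ * Real.sqrt H * Real.sqrt lmax + ‖D‖) * ((Real.sqrt lmin)⁻¹ * α) :=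
        mul_le_mul_of_nonneg_left hu_le hcoef
    _ = (‖C‖ * Real.sqrt H * Real.sqrt lmax + ‖D‖) * (Real.sqrt lmin)⁻¹ * α := by ring
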